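/- arXiv:0712.1388 — 5 statements merged into one kernel-verified Lean document; each statement's English description precedes it below -/
import Mathlib

section
/- Let F_1, …, F_D be N×N complex Hermitian matrices. Then exactly one of the following two systems is feasible: (a) there exists x ∈ ℝ^D such that the matrix x_1 F_1 + ⋯ + x_D F_D + I is negative definite; (b) there exists an N×N complex Hermitian matrix Z such that Z is positive semidefinite, Z ≠ 0, and Tr(F_i Z) = 0 for all i = 1, …, D. (That is, (b) is feasible if and only if (a) is infeasible.) -/
open Matrix
open scoped ComplexOrder

variable {N : ℕ}



lemma herm_quad_real {M : Matrix (Fin N) (Fin N) ℂ} (hM : M.IsHermitian) (x : Fin N → ℂ) :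
    star (star x ⬝ᵥ M.mulVec x) = star x ⬝ᵥ M.mulVec x := by
  conv_lhs => rw [star_dotProduct]
  rw [star_star, star_mulVec, ← dotProduct_mulVec, hM.eq]

lemma herm_trace_real {F Z : Matrix (Fin N) (Fin N) ℂ} (hFh : F.IsHermitian)
    (hZh : Z.IsHermitian) : star ((F * Z).trace) = (F * Z).trace := by
  rw [← trace_conjTranspose, conjTranspose_mul, hFh.eq, hZh.eq, trace_mul_comm]

lemma psd_diag_nonneg {Z : Matrix (Fin N) (Fin N) ℂ} (hZ : Z.PosSemidef) (j : Fin N) :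
    0 ≤ Z j j := by
  have := hZ.dotProduct_mulVec_nonneg (Pi.single j 1)
  simpa [mulVec_single, single_dotProduct, ← Pi.single_star] using this

lemma psd_trace_nonneg {Z : Matrix (Fin N) (Fin N) ℂ} (hZ : Z.PosSemidef) :
    0 ≤ Z.trace := by
  rw [Matrix.trace]
  exact Finset.sum_nonneg fun j _ => psd_diag_nonneg hZ j

lemma psd_trace_eq_zero {Z : Matrix (Fin N) (Fin N) ℂ} (hZ : Z.PosSemidef)
    (h : Z.trace = 0) : Z = 0 := by
  have hdiag : ∀ j, Z j j = 0 := by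
    intro j
    have hsum : ∑ j, Z j j = 0 := h
    have := (Finset.sum_eq_zero_iff_of_nonneg (fun j _ => psd_diag_nonneg hZ j)).mp hsum
    exact this j (Finset.mem_univ j)
  ext j k
  have hq : star (Pi.single k 1) ⬝ᵥ Z.mulVec (Pi.single k 1) = 0 := by
    simpa [mulVec_single, single_dotProduct, ← Pi.single_star] using hdiag k
  have := (hZ.dotProduct_mulVec_zero_iff (Pi.single k 1)).mp hq
  have hcol : Z.mulVec (Pi.single k 1) j = 0 := by rw [this]; rfl
  simpa [mulVec_single] using hcol

lemma psd_mul_trace_nonneg {P Z : Matrix (Fin N) (Fin N) ℂ} (hP : P.PosSemidef)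
    (hZ : Z.PosSemidef) : 0 ≤ (P * Z).trace := by
  obtain ⟨B, rfl⟩ : ∃ B : Matrix (Fin N) (Fin N) ℂ, Z = Bᴴ * B := by
    open scoped MatrixOrder Matrix.Norms.L2Operator in
    exact CStarAlgebra.nonneg_iff_eq_star_mul_self.mp hZ.nonneg
  have h1 : (P * (Bᴴ * B)).trace = (B * P * Bᴴ).trace := by
    rw [← Matrix.mul_assoc, Matrix.trace_mul_cycle]
  rw [h1]
  refine Finset.sum_nonneg fun j _ => ?_
  have := hP.mul_mul_conjTranspose_same B
  have h2 := this.dotProduct_mulVec_nonneg (Pi.single j 1)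
  simpa [mulVec_single, single_dotProduct, ← Pi.single_star] using h2

lemma trace_mul_vecMulVec (F : Matrix (Fin N) (Fin N) ℂ) (v : Fin N → ℂ) :
    (F * vecMulVec v (star v)).trace = star v ⬝ᵥ F.mulVec v := by
  simp only [Matrix.trace, Matrix.diag, Matrix.mul_apply, vecMulVec_apply,
    dotProduct, mulVec, Pi.star_apply, Finset.mul_sum]
  congr 1; ext j; congr 1; ext k; ring

lemma vecMulVec_posSemidef (v : Fin N → ℂ) : (vecMulVec v (star v)).PosSemidef := by
  have : vecMulVec v (star v) = Matrix.replicateCol (Fin 1) v * (Matrix.replicateCol (Fin 1) v)ᴴ := by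
    ext j k
    simp [vecMulVec_apply, Matrix.mul_apply, Matrix.replicateCol, Matrix.conjTranspose_apply]
  rw [this]
  exact posSemidef_self_mul_conjTranspose _

lemma vecMulVec_trace (v : Fin N → ℂ) :
    (vecMulVec v (star v)).trace = (∑ j, Complex.normSq (v j) : ℝ) := by
  simp [Matrix.trace, Matrix.diag, vecMulVec_apply, Complex.mul_conj]

lemma psd_smul {Z : Matrix (Fin N) (Fin N) ℂ} (hZ : Z.PosSemidef) {c : ℝ} (hc : 0 ≤ c) :
    ((c : ℂ) • Z).PosSemidef := by
  refine PosSemidef.of_dotProduct_mulVec_nonneg ?_ fun x => ?_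
  · have := hZ.1
    unfold Matrix.IsHermitian at *
    rw [conjTranspose_smul, this]
    simp
  · have h := hZ.dotProduct_mulVec_nonneg x
    rw [Matrix.smul_mulVec, dotProduct_smul]
    have : (0:ℂ) ≤ (c:ℂ) := by exact_mod_cast Complex.zero_le_real.mpr hc
    calc (0:ℂ) = (c:ℂ) • 0 := by simp
    _ ≤ (c:ℂ) • (star x ⬝ᵥ Z.mulVec x) := by
        exact smul_le_smul_of_nonneg_left h this
lemma psd_entry_bound {Z : Matrix (Fin N) (Fin N) ℂ} (hZ : Z.PosSemidef)
    (ht : Z.trace = 1) (j k : Fin N) : ‖Z j k‖ ≤ 1 := by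
  obtain ⟨B, rfl⟩ : ∃ B : Matrix (Fin N) (Fin N) ℂ, Z = Bᴴ * B := by
    open scoped MatrixOrder Matrix.Norms.L2Operator in
    exact CStarAlgebra.nonneg_iff_eq_star_mul_self.mp hZ.nonneg
  set fv : Fin N → EuclideanSpace ℂ (Fin N) := fun a => WithLp.toLp 2 (fun l => B l a) with hfv
  have hentry : ∀ a b : Fin N, (Bᴴ * B) a b = inner (𝕜 := ℂ) (fv a) (fv b) := by
    intro a b
    simp [hfv, Matrix.mul_apply, Matrix.conjTranspose_apply, PiLp.inner_apply,
      RCLike.inner_apply, mul_comm]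
  have hdiag_le : ∀ a : Fin N, ‖fv a‖ ≤ 1 := by
    intro a
    have h1 : ((Bᴴ * B) a a).re = ‖fv a‖^2 := by
      rw [hentry a a, inner_self_eq_norm_sq_to_K]
      norm_cast
    have h2 : ((Bᴴ * B) a a).re ≤ 1 := by
      have hs : ∑ l, ((Bᴴ * B) l l).re = 1 := by
        have := congrArg Complex.re ht
        simpa [Matrix.trace, Matrix.diag, Complex.re_sum] using this
      have hnn : ∀ l, 0 ≤ ((Bᴴ * B) l l).re := by
        intro l
        exact (Complex.le_def.mp (psd_diag_nonneg hZ l)).1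
      calc ((Bᴴ * B) a a).re ≤ ∑ l, ((Bᴴ * B) l l).re :=
            Finset.single_le_sum (fun l _ => hnn l) (Finset.mem_univ a)
        _ = 1 := hs
    nlinarith [norm_nonneg (fv a)]
  calc ‖(Bᴴ * B) j k‖ = ‖inner (𝕜 := ℂ) (fv j) (fv k)‖ := by rw [hentry j k]
    _ ≤ ‖fv j‖ * ‖fv k‖ := norm_inner_le_norm _ _
    _ ≤ 1 * 1 := mul_le_mul (hdiag_le j) (hdiag_le k) (norm_nonneg _) zero_le_one
    _ = 1 := by ring
lemma isClosed_nonneg_complex : IsClosed {z : ℂ | 0 ≤ z} := by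
  have h : {z : ℂ | 0 ≤ z} = Complex.re ⁻¹' (Set.Ici 0) ∩ Complex.im ⁻¹' {0} := by
    ext z
    simp [Complex.le_def, eq_comm]
  rw [h]
  exact (isClosed_Ici.preimage Complex.continuous_re).inter
    (isClosed_singleton.preimage Complex.continuous_im)

lemma isClosed_spx :
    IsClosed {Z : Matrix (Fin N) (Fin N) ℂ | Z.PosSemidef ∧ Z.trace = 1} := by
  have h1 : IsClosed {Z : Matrix (Fin N) (Fin N) ℂ | Zᴴ = Z} :=
    isClosed_eq (continuous_id.matrix_conjTranspose) continuous_id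
  have h2 : ∀ x : Fin N → ℂ,
      IsClosed {Z : Matrix (Fin N) (Fin N) ℂ | 0 ≤ star x ⬝ᵥ Z.mulVec x} := by
    intro x
    have hc : Continuous fun Z : Matrix (Fin N) (Fin N) ℂ => star x ⬝ᵥ Z.mulVec x :=
      Continuous.dotProduct continuous_const
        (Continuous.matrix_mulVec continuous_id continuous_const)
    exact isClosed_nonneg_complex.preimage hc
  have h3 : IsClosed {Z : Matrix (Fin N) (Fin N) ℂ | Z.trace = 1} :=
    isClosed_eq (Continuous.matrix_trace continuous_id) continuous_const
  have heq : {Z : Matrix (Fin N) (Fin N) ℂ | Z.PosSemidef ∧ Z.trace = 1}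
      = ({Z : Matrix (Fin N) (Fin N) ℂ | Zᴴ = Z}
          ∩ ⋂ x : Fin N → ℂ, {Z | 0 ≤ star x ⬝ᵥ Z.mulVec x})
        ∩ {Z | Z.trace = 1} := by
    ext Z
    simp only [Set.mem_setOf_eq, Set.mem_inter_iff, Set.mem_iInter]
    exact ⟨fun ⟨h, ht⟩ => ⟨⟨h.1, fun x => h.dotProduct_mulVec_nonneg x⟩, ht⟩, fun ⟨⟨h1', h2'⟩, ht⟩ => ⟨PosSemidef.of_dotProduct_mulVec_nonneg h1' h2', ht⟩⟩
  rw [heq]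
  exact ((h1.inter (isClosed_iInter h2)).inter h3)

lemma isCompact_spx :
    IsCompact {Z : Matrix (Fin N) (Fin N) ℂ | Z.PosSemidef ∧ Z.trace = 1} := by
  have hK : IsCompact (Set.univ.pi fun _ : Fin N => Set.univ.pi fun _ : Fin N =>
      Metric.closedBall (0 : ℂ) 1) :=
    isCompact_univ_pi fun _ => isCompact_univ_pi fun _ => isCompact_closedBall _ _
  refine IsCompact.of_isClosed_subset hK isClosed_spx ?_
  intro Z hZ
  refine Set.mem_univ_pi.mpr ?_
  intro j
  rw [Set.mem_univ_pi]
  intro k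
  rw [Metric.mem_closedBall, dist_zero_right]
  exact psd_entry_bound hZ.1 hZ.2 j k
/-- Strong alternatives for the SDP feasibility problem:
(b) (∃ Z Hermitian PSD, Z ≠ 0, Tr(F_i Z) = 0 ∀i) is feasible iff
(a) (∃ x, ∑ x_i F_i + I is negative definite) is infeasible. -/
theorem strong_alternatives (D N : ℕ) (F : Fin D → Matrix (Fin N) (Fin N) ℂ)
    (hF : ∀ i, (F i).IsHermitian) :
    (∃ Z : Matrix (Fin N) (Fin N) ℂ, Z.IsHermitian ∧ Z.PosSemidef ∧ Z ≠ 0 ∧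
        ∀ i, (F i * Z).trace = 0) ↔
      ¬ (∃ x : Fin D → ℝ, (-(∑ i, (x i : ℂ) • F i + 1)).PosDef) := by
  classical
  constructor
  · rintro ⟨Z, hZh, hZpsd, hZne, hZtr⟩ ⟨x, hx⟩
    have htr1 : ((∑ i, (x i : ℂ) • F i + 1) * Z).trace = Z.trace := by
      simp [add_mul, Finset.sum_mul, smul_mul_assoc, trace_add, trace_smul, hZtr]
    have hneg : 0 ≤ ((-(∑ i, (x i : ℂ) • F i + 1)) * Z).trace :=
      psd_mul_trace_nonneg hx.posSemidef hZpsd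
    rw [Matrix.neg_mul, trace_neg, htr1] at hneg
    have hZtrpos : 0 < Z.trace :=
      lt_of_le_of_ne (psd_trace_nonneg hZpsd)
        (fun h => hZne (psd_trace_eq_zero hZpsd h.symm))
    exact absurd (lt_of_lt_of_le hZtrpos (neg_nonneg.mp hneg)) (lt_irrefl 0)
  · intro hnot
    set S := {Z : Matrix (Fin N) (Fin N) ℂ | Z.PosSemidef ∧ Z.trace = 1} with hSdef
    set φ : Matrix (Fin N) (Fin N) ℂ → (Fin D → ℝ) :=
      fun Z i => ((F i * Z).trace).re with hφdef
    by_cases h0 : (0 : Fin D → ℝ) ∈ φ '' S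
    · obtain ⟨Z, hZS, hZ0⟩ := h0
      refine ⟨Z, hZS.1.isHermitian, hZS.1, ?_, ?_⟩
      · intro h
        have := hZS.2
        rw [h] at this
        simp at this
      · intro i
        have hre : ((F i * Z).trace).re = 0 := congrFun hZ0 i
        have hreal := herm_trace_real (hF i) hZS.1.isHermitian
        have him : ((F i * Z).trace).im = 0 := by
          have := congrArg Complex.im hreal
          simp only [Complex.star_def, Complex.conj_im] at this
          linarith
        exact Complex.ext (by simpa using hre) (by simpa using him)
    · -- separation
      exfalso
      apply hnot
      -- convexity of φ '' S
      have hsmul : ∀ (a : ℝ) (Z : Matrix (Fin N) (Fin N) ℂ), a • Z = (a : ℂ) • Z := by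
        intro a Z
        ext j k
        simp [Complex.real_smul]
      have hφlin : ∀ (a b : ℝ) (Z W : Matrix (Fin N) (Fin N) ℂ),
          φ ((a : ℂ) • Z + (b : ℂ) • W) = a • φ Z + b • φ W := by
        intro a b Z W
        funext i
        simp only [hφdef, Matrix.mul_add, mul_smul_comm, trace_add, trace_smul,
          Pi.add_apply, Pi.smul_apply, smul_eq_mul]
        simp [Complex.add_re, Complex.mul_re]
      have hTconv : Convex ℝ (φ '' S) := by
        rintro p ⟨Z, hZ, rfl⟩ q ⟨W, hW, rfl⟩ a b ha hb hab
        refine ⟨(a : ℂ) • Z + (b : ℂ) • W, ⟨?_, ?_⟩, ?_⟩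
        · exact (psd_smul hZ.1 ha).add (psd_smul hW.1 hb)
        · rw [trace_add, trace_smul, trace_smul, hZ.2, hW.2]
          simp [← Complex.ofReal_add, hab]
        · rw [hφlin]
      have hφcont : Continuous φ := by
        refine continuous_pi fun i => ?_
        exact Complex.continuous_re.comp
          ((continuous_const.matrix_mul continuous_id).matrix_trace)
      have hTclosed : IsClosed (φ '' S) :=
        (isCompact_spx.image hφcont).isClosed
      obtain ⟨f, u, hfT, hf0⟩ := geometric_hahn_banach_closed_point hTconv hTclosed h0
      have hu : u < 0 := by simpa using hf0
      set c : Fin D → ℝ := fun i => f (Pi.single i 1) with hcdef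
      have hfv : ∀ p : Fin D → ℝ, f p = ∑ i, p i * c i := by
        intro p
        have hp : p = ∑ i, p i • (Pi.single i 1 : Fin D → ℝ) := by
          rw [← Finset.univ_sum_single p]
          refine Finset.sum_congr rfl fun i _ => ?_
          ext j
          simp [Pi.single_apply]
        conv_lhs => rw [hp]
        rw [map_sum]
        refine Finset.sum_congr rfl fun i _ => ?_
        rw [f.map_smul]
        simp [hcdef]
      have hkey : ∀ Z ∈ S, ∑ i, c i * ((F i * Z).trace).re < u := by
        intro Z hZ
        have h4 := hfT (φ Z) ⟨Z, hZ, rfl⟩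
        rw [hfv] at h4
        calc ∑ i, c i * ((F i * Z).trace).re = ∑ i, φ Z i * c i := by
              refine Finset.sum_congr rfl fun i _ => ?_
              simp [hφdef, mul_comm]
          _ < u := h4
      set x : Fin D → ℝ := fun i => -(u⁻¹ * c i) with hxdef
      refine ⟨x, PosDef.of_dotProduct_mulVec_pos ?_ ?_⟩
      · -- Hermitian
        have hherm : (∑ i, (x i : ℂ) • F i + 1).IsHermitian := by
          apply Matrix.IsHermitian.add ?_ Matrix.isHermitian_one
          show (∑ i, (x i : ℂ) • F i)ᴴ = _
          rw [conjTranspose_sum]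
          refine Finset.sum_congr rfl fun i _ => ?_
          rw [conjTranspose_smul, (hF i).eq]
          simp
        exact hherm.neg
      · intro v hv
        set n2 : ℝ := ∑ j, Complex.normSq (v j) with hn2def
        have hn2 : 0 < n2 := by
          have : ∃ j, v j ≠ 0 := by
            by_contra hc
            push_neg at hc
            exact hv (funext hc)
          obtain ⟨j, hj⟩ := this
          refine Finset.sum_pos' (fun l _ => Complex.normSq_nonneg _) ⟨j, Finset.mem_univ j, ?_⟩
          exact Complex.normSq_pos.mpr hj
        set Zv : Matrix (Fin N) (Fin N) ℂ := ((n2⁻¹ : ℝ) : ℂ) • vecMulVec v (star v)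
          with hZvdef
        have hZvS : Zv ∈ S := by
          constructor
          · exact psd_smul (vecMulVec_posSemidef v) (inv_nonneg.mpr hn2.le)
          · rw [hZvdef, trace_smul, vecMulVec_trace, smul_eq_mul, ← Complex.ofReal_mul,
              inv_mul_cancel₀ hn2.ne']
            simp
        have hkeyv := hkey Zv hZvS
        have htri : ∀ i, (F i * Zv).trace = ((n2⁻¹ : ℝ) : ℂ) * (star v ⬝ᵥ (F i).mulVec v) := by
          intro i
          rw [hZvdef, mul_smul_comm, trace_smul, trace_mul_vecMulVec, smul_eq_mul]
        have hkey2 : ∑ i, c i * (star v ⬝ᵥ (F i).mulVec v).re < u * n2 := by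
          have hsum : ∑ i, c i * ((F i * Zv).trace).re
              = n2⁻¹ * ∑ i, c i * (star v ⬝ᵥ (F i).mulVec v).re := by
            rw [Finset.mul_sum]
            refine Finset.sum_congr rfl fun i _ => ?_
            rw [htri i]
            simp [Complex.mul_re]
            ring
          rw [hsum] at hkeyv
          have h3 := mul_lt_mul_of_pos_left hkeyv hn2
          calc ∑ i, c i * (star v ⬝ᵥ (F i).mulVec v).re
              = n2 * (n2⁻¹ * ∑ i, c i * (star v ⬝ᵥ (F i).mulVec v).re) := by
                field_simp
            _ < n2 * u := h3
            _ = u * n2 := by ring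
        -- quadratic form value
        set w : ℂ := star v ⬝ᵥ (∑ i, (x i : ℂ) • F i + 1).mulVec v with hwdef
        have hherm : (∑ i, (x i : ℂ) • F i + 1).IsHermitian := by
          apply Matrix.IsHermitian.add ?_ Matrix.isHermitian_one
          show (∑ i, (x i : ℂ) • F i)ᴴ = _
          rw [conjTranspose_sum]
          refine Finset.sum_congr rfl fun i _ => ?_
          rw [conjTranspose_smul, (hF i).eq]
          simp
        have hwreal : star w = w := herm_quad_real hherm v
        have hwim : w.im = 0 := by
          have := congrArg Complex.im hwreal
          simp only [Complex.star_def, Complex.conj_im] at this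
          linarith
        have hwtrace : w = ((∑ i, (x i : ℂ) • F i + 1) * vecMulVec v (star v)).trace := by
          rw [trace_mul_vecMulVec]
        have hwexp : w = ∑ i, (x i : ℂ) * (star v ⬝ᵥ (F i).mulVec v) + (n2 : ℂ) := by
          rw [hwtrace, add_mul, trace_add, Finset.sum_mul, trace_sum, one_mul,
            vecMulVec_trace]
          congr 1
          refine Finset.sum_congr rfl fun i _ => ?_
          rw [smul_mul_assoc, trace_smul, smul_eq_mul, trace_mul_vecMulVec]
        have hwre : w.re < 0 := by
          have : w.re = ∑ i, x i * (star v ⬝ᵥ (F i).mulVec v).re + n2 := by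
            rw [hwexp]
            simp [Complex.add_re, Complex.re_sum, Complex.mul_re]
          rw [this]
          have hx2 : ∑ i, x i * (star v ⬝ᵥ (F i).mulVec v).re
              = -(u⁻¹ * ∑ i, c i * (star v ⬝ᵥ (F i).mulVec v).re) := by
            rw [Finset.mul_sum, ← Finset.sum_neg_distrib]
            refine Finset.sum_congr rfl fun i _ => ?_
            simp [hxdef]
            ring
          rw [hx2]
          have hui : u⁻¹ < 0 := inv_neg''.mpr hu
          have h5 := mul_lt_mul_of_neg_left hkey2 hui
          rw [← mul_assoc, inv_mul_cancel₀ hu.ne, one_mul] at h5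
          linarith
        -- conclude
        have hmv : star v ⬝ᵥ (-(∑ i, (x i : ℂ) • F i + 1)).mulVec v = -w := by
          rw [hwdef, Matrix.neg_mulVec, dotProduct_neg]
        rw [hmv]
        rw [Complex.lt_def]
        constructor
        · simpa using hwre
        · simp [hwim]
end

section
/- Let σ be a complex matrix indexed by pairs from A × B, where A = {0,1}^n indexes n qubits and B is any finite index type. Then the partial trace of σ over B satisfies Tr_B(σ) = 2^{−n} · ∑_p Tr((σ_p ⊗ I_B) · σ) · σ_p, where the sum ranges over all strings p : {1,…,n} → {0,1,2,3}. -/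
open Matrix
open scoped Kronecker

/-- The single-qubit Pauli matrices I, X, Y, Z. -/
noncomputable def pauli : Fin 4 → Matrix (Fin 2) (Fin 2) ℂ
  | 0 => 1
  | 1 => !![0, 1; 1, 0]
  | 2 => !![0, -Complex.I; Complex.I, 0]
  | 3 => !![1, 0; 0, -1]

/-- The n-qubit Pauli matrix σ_p = σ_{p 1} ⊗ ⋯ ⊗ σ_{p n}. -/
noncomputable def pauliN {n : ℕ} (p : Fin n → Fin 4) :
    Matrix (Fin n → Fin 2) (Fin n → Fin 2) ℂ :=
  fun s t => ∏ i, pauli (p i) (s i) (t i)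

/-- The partial trace over the second tensor factor:
(Tr_B σ)_{s,t} = ∑_{k ∈ B} σ_{(s,k),(t,k)}. -/
noncomputable def partialTraceB {A B : Type*} [Fintype B]
    (σ : Matrix (A × B) (A × B) ℂ) : Matrix A A ℂ :=
  fun s t => ∑ k : B, σ (s, k) (t, k)

lemma pauli_orth (u v s t : Fin 2) :
    ∑ a : Fin 4, pauli a u v * pauli a s t =
      (2:ℂ) * (if u = t ∧ v = s then 1 else 0) := by
  fin_cases u <;> fin_cases v <;> fin_cases s <;> fin_cases t <;>
    simp [pauli, Fin.sum_univ_four, Matrix.one_apply] <;> ring_nf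

lemma pauliN_orth {n : ℕ} (u v s t : Fin n → Fin 2) :
    ∑ p : Fin n → Fin 4, pauliN p u v * pauliN p s t =
      (2:ℂ)^n * (if u = t ∧ v = s then 1 else 0) := by
  have h : ∀ p : Fin n → Fin 4, pauliN p u v * pauliN p s t
      = ∏ i, (pauli (p i) (u i) (v i) * pauli (p i) (s i) (t i)) := by
    intro p; simp [pauliN, Finset.prod_mul_distrib]
  simp_rw [h]
  rw [← Fintype.piFinset_univ, Finset.sum_prod_piFinset Finset.univ (fun i a => pauli a (u i) (v i) * pauli a (s i) (t i))]
  simp_rw [pauli_orth, Finset.prod_mul_distrib, Finset.prod_const, Finset.card_univ,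
    Fintype.card_fin]
  congr 1
  by_cases h2 : u = t ∧ v = s
  · obtain ⟨h3, h4⟩ := h2
    simp [funext_iff] at h3 h4
    simp [h3, h4, funext_iff]
  · rw [if_neg h2]
    simp only [funext_iff, not_and_or] at h2
    rcases h2 with h2 | h2 <;> push_neg at h2 <;> obtain ⟨i, hi⟩ := h2 <;>
      exact Finset.prod_eq_zero (Finset.mem_univ i) (by simp [hi])

/-- the partial trace over B expands in the Pauli basis:
Tr_B(σ) = 2^{-n} ∑_p Tr((σ_p ⊗ I_B) σ) σ_p. -/
theorem partialTrace_pauli_expansion (n : ℕ) (B : Type*) [Fintype B] [DecidableEq B]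
    (σ : Matrix ((Fin n → Fin 2) × B) ((Fin n → Fin 2) × B) ℂ) :
    partialTraceB σ =
      ((2 : ℂ) ^ n)⁻¹ •
        ∑ p : Fin n → Fin 4, ((pauliN p ⊗ₖ (1 : Matrix B B ℂ)) * σ).trace • pauliN p := by
  funext s t
  simp only [Matrix.smul_apply, Matrix.sum_apply, partialTraceB, smul_eq_mul,
    Matrix.trace, Matrix.diag, Matrix.mul_apply, Matrix.kroneckerMap_apply,
    Fintype.sum_prod_type, Matrix.one_apply]
  simp_rw [mul_ite, mul_one, mul_zero, ite_mul, zero_mul, Finset.sum_ite_eq,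
    Finset.mem_univ, if_true]
  have hre : ∀ (p : Fin n → Fin 4) (u v : Fin n → Fin 2) (k : B),
      pauliN p u v * σ (v, k) (u, k) * pauliN p s t
        = σ (v, k) (u, k) * (pauliN p u v * pauliN p s t) := by intros; ring
  simp_rw [Finset.sum_mul, hre]
  conv_rhs =>
    rw [Finset.sum_comm]
    enter [2, 2, u]
    rw [Finset.sum_comm]
    enter [2, k]
    rw [Finset.sum_comm]
  simp_rw [← Finset.mul_sum, pauliN_orth]
  simp only [mul_ite, mul_one, mul_zero, ite_and, Finset.sum_ite_eq', Finset.sum_ite_eq,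
    Finset.mem_univ, if_true, Finset.sum_ite_irrel, Finset.sum_const_zero]
  rw [Finset.mul_sum]
  refine (Finset.sum_congr rfl fun k _ => ?_).symm
  have h2 : (2:ℂ)^n ≠ 0 := pow_ne_zero _ two_ne_zero
  field_simp
end

section
/- Let ρ and τ be 2^n × 2^n complex Hermitian matrices with Tr(ρ) = Tr(τ). Then their trace-norm distance satisfies ‖τ − ρ‖₁ ≤ ∑_{p ≠ 0} |Tr(σ_p τ) − Tr(σ_p ρ)|, where the sum ranges over all strings p : {1,…,n} → {0,1,2,3} other than the all-zero string (i.e., excluding the identity Pauli matrix). -/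
open Matrix
open scoped ComplexOrder

/-- The positive semidefinite square root of a positive semidefinite matrix
(the definition removed from Mathlib, restated with its old value). -/
noncomputable def Matrix.PosSemidef.sqrt {m : Type*} [Fintype m] [DecidableEq m]
    {A : Matrix m m ℂ} (hA : A.PosSemidef) : Matrix m m ℂ :=
  hA.1.eigenvectorUnitary.1 * diagonal ((↑) ∘ (√·) ∘ hA.1.eigenvalues) *
    (star hA.1.eigenvectorUnitary : Matrix m m ℂ)

/-- The trace norm ‖A‖₁ = Tr √(A†A), the sum of the singular values of A. -/
noncomputable def traceNorm {n : ℕ}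
    (A : Matrix (Fin n → Fin 2) (Fin n → Fin 2) ℂ) : ℝ :=
  ((Matrix.posSemidef_conjTranspose_mul_self A).sqrt).trace.re


lemma pauli_complete (a b c d : Fin 2) :
    ∑ k : Fin 4, pauli k a b * pauli k c d = if a = d ∧ b = c then 2 else 0 := by
  fin_cases a <;> fin_cases b <;> fin_cases c <;> fin_cases d <;>
    simp [pauli, Fin.sum_univ_four, Matrix.one_apply, Complex.ext_iff] <;> norm_num

lemma pauli_star (k : Fin 4) (s t : Fin 2) :
    ∑ u : Fin 2, star (pauli k u s) * pauli k u t = if s = t then 1 else 0 := by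
  fin_cases k <;> fin_cases s <;> fin_cases t <;>
    simp [pauli, Fin.sum_univ_two, Matrix.one_apply, Complex.ext_iff]

lemma prod_ite_zero {n : ℕ} (P : Fin n → Prop) [DecidablePred P] (c : ℂ) :
    ∏ i, (if P i then c else 0) = if ∀ i, P i then c ^ n else 0 := by
  by_cases h : ∀ i, P i
  · simp [h, Finset.prod_const]
  · push_neg at h
    obtain ⟨i, hi⟩ := h
    rw [if_neg (by push_neg; exact ⟨i, hi⟩)]
    exact Finset.prod_eq_zero (Finset.mem_univ i) (by simp [hi])

lemma pauliN_complete {n : ℕ} (a b c d : Fin n → Fin 2) :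
    ∑ p : Fin n → Fin 4, pauliN p a b * pauliN p c d =
      if a = d ∧ b = c then (2 : ℂ) ^ n else 0 := by
  have h1 : ∀ p : Fin n → Fin 4, pauliN p a b * pauliN p c d
      = ∏ i, (pauli (p i) (a i) (b i) * pauli (p i) (c i) (d i)) := fun p => by
    rw [pauliN, pauliN, ← Finset.prod_mul_distrib]
  simp_rw [h1]
  have h2 := Finset.prod_univ_sum (fun _ : Fin n => (Finset.univ : Finset (Fin 4)))
    (fun i k => pauli k (a i) (b i) * pauli k (c i) (d i))
  rw [Fintype.piFinset_univ] at h2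
  rw [← h2]
  simp_rw [pauli_complete]
  rw [prod_ite_zero (fun i => a i = d i ∧ b i = c i) 2]
  congr 1
  simp [funext_iff, forall_and]

lemma pauliN_unitary {n : ℕ} (p : Fin n → Fin 4) :
    (pauliN p)ᴴ * pauliN p = 1 := by
  ext s t
  rw [mul_apply, Matrix.one_apply]
  have h1 : ∀ u, (pauliN p)ᴴ s u * pauliN p u t
      = ∏ i, (star (pauli (p i) (u i) (s i)) * pauli (p i) (u i) (t i)) := fun u => by
    rw [conjTranspose_apply, pauliN, pauliN, star_prod, ← Finset.prod_mul_distrib]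
  simp_rw [h1]
  have h2 := Finset.prod_univ_sum (fun _ : Fin n => (Finset.univ : Finset (Fin 2)))
    (fun i u => star (pauli (p i) u (s i)) * pauli (p i) u (t i))
  rw [Fintype.piFinset_univ] at h2
  rw [← h2]
  simp_rw [pauli_star]
  rw [prod_ite_zero (fun i => s i = t i) 1]
  simp [funext_iff]

lemma pauliN_zero {n : ℕ} : pauliN (fun _ : Fin n => 0) = 1 := by
  ext s t
  rw [pauliN, Matrix.one_apply]
  have h : ∀ i : Fin n, pauli 0 (s i) (t i) = if s i = t i then 1 else 0 := fun i => by
    simp [pauli, Matrix.one_apply]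
  simp_rw [h]
  rw [prod_ite_zero (fun i => s i = t i) 1]
  simp [funext_iff]

lemma pauliN_expand {n : ℕ} (M : Matrix (Fin n → Fin 2) (Fin n → Fin 2) ℂ)
    (s t : Fin n → Fin 2) :
    ∑ p : Fin n → Fin 4, (pauliN p * M).trace * pauliN p s t = (2:ℂ) ^ n * M s t := by
  have h1 : ∀ p : Fin n → Fin 4, (pauliN p * M).trace * pauliN p s t
      = ∑ a, ∑ b, M b a * (pauliN p a b * pauliN p s t) := fun p => by
    rw [trace, Finset.sum_mul]
    congr 1; ext a
    rw [diag_apply, mul_apply, Finset.sum_mul]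
    congr 1; ext b; ring
  simp_rw [h1]
  rw [Finset.sum_comm]
  have h2 : ∀ a, ∑ p : Fin n → Fin 4, ∑ b, M b a * (pauliN p a b * pauliN p s t)
      = ∑ b, M b a * ∑ p : Fin n → Fin 4, pauliN p a b * pauliN p s t := fun a => by
    rw [Finset.sum_comm]; congr 1; ext b; rw [Finset.mul_sum]
  simp_rw [h2, pauliN_complete, mul_ite, mul_zero]
  rw [Finset.sum_eq_single t]
  · rw [Finset.sum_eq_single s]
    · simp [mul_comm]
    · intro b _ hb; simp [hb]
    · intro h; exact absurd (Finset.mem_univ s) h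
  · intro a _ ha
    apply Finset.sum_eq_zero; intro b _
    simp [ha]
  · intro h; exact absurd (Finset.mem_univ t) h

-- Step A: traceNorm of a Hermitian matrix is the sum of |eigenvalues|
lemma traceNorm_hermitian {M : Matrix (Fin n → Fin 2) (Fin n → Fin 2) ℂ}
    (hM : M.IsHermitian) : traceNorm M = ∑ i, |hM.eigenvalues i| := by
  set U : Matrix (Fin n → Fin 2) (Fin n → Fin 2) ℂ := ((hM.eigenvectorUnitary : unitaryGroup (Fin n → Fin 2) ℂ) : Matrix (Fin n → Fin 2) (Fin n → Fin 2) ℂ) with hUdef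
  have hUU : Uᴴ * U = 1 := by
    rw [hUdef, ← Matrix.star_eq_conjTranspose]
    exact Matrix.mem_unitaryGroup_iff'.mp hM.eigenvectorUnitary.2
  have hUU' : U * Uᴴ = 1 := by
    rw [hUdef, ← Matrix.star_eq_conjTranspose]
    exact Matrix.mem_unitaryGroup_iff.mp hM.eigenvectorUnitary.2
  set D : Matrix (Fin n → Fin 2) (Fin n → Fin 2) ℂ :=
    diagonal (fun i => ((|hM.eigenvalues i| : ℝ) : ℂ)) with hDdef
  set Dl : Matrix (Fin n → Fin 2) (Fin n → Fin 2) ℂ :=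
    diagonal (fun i => (hM.eigenvalues i : ℂ)) with hDldef
  have hspec : M = U * Dl * Uᴴ := by
    simpa [Matrix.star_eq_conjTranspose, Function.comp_def] using hM.spectral_theorem
  have hDDl : D * D = Dl * Dl := by
    have habs : (fun i => ((|hM.eigenvalues i| : ℝ) : ℂ) * ((|hM.eigenvalues i| : ℝ) : ℂ))
        = fun i => ((hM.eigenvalues i : ℝ) : ℂ) * ((hM.eigenvalues i : ℝ) : ℂ) := by
      funext i
      rw [← Complex.ofReal_mul, ← Complex.ofReal_mul, abs_mul_abs_self]
    rw [hDdef, hDldef, diagonal_mul_diagonal, diagonal_mul_diagonal, habs]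
  have key : ∀ A B : Matrix (Fin n → Fin 2) (Fin n → Fin 2) ℂ,
      (U * A * Uᴴ) * (U * B * Uᴴ) = U * (A * B) * Uᴴ := by
    intro A B
    calc (U * A * Uᴴ) * (U * B * Uᴴ) = U * A * ((Uᴴ * U) * (B * Uᴴ)) := by
          simp only [Matrix.mul_assoc]
      _ = U * (A * B) * Uᴴ := by rw [hUU, Matrix.one_mul]; simp only [Matrix.mul_assoc]
  have hBps : (U * D * Uᴴ).PosSemidef := by
    apply PosSemidef.mul_mul_conjTranspose_same
    refine posSemidef_diagonal_iff.mpr fun i => ?_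
    exact Complex.zero_le_real.mpr (abs_nonneg (hM.eigenvalues i))
  have hsq : (U * D * Uᴴ) ^ 2 = Mᴴ * M := by
    rw [hM.eq, pow_two, key, hDDl, ← key, ← hspec]
  have hsqrt : (U * D * Uᴴ) = (Matrix.posSemidef_conjTranspose_mul_self M).sqrt :=
    by
    have e1 : (Matrix.posSemidef_conjTranspose_mul_self M).sqrt = cfc Real.sqrt (Mᴴ * M) := by
      rw [(Matrix.posSemidef_conjTranspose_mul_self M).1.cfc_eq]; rfl
    have e2 : U * D * Uᴴ = cfc (fun x : ℝ => |x|) M := by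
      rw [hM.cfc_eq]; rfl
    rw [e1, e2, hM.eq, ← pow_two, ← cfc_comp_pow (f := Real.sqrt) (a := M) (n := 2)]
    congr 1; funext x; exact (Real.sqrt_sq_eq_abs x).symm
  rw [traceNorm, ← hsqrt]
  rw [Matrix.trace_mul_cycle, hUU, Matrix.one_mul]
  rw [hDdef, trace_diagonal]
  rw [Complex.re_sum]
  simp

set_option maxHeartbeats 2000000 in
/-- for Hermitian ρ, τ with equal traces,
‖τ − ρ‖₁ ≤ ∑_{p ≠ 0} |Tr(σ_p τ) − Tr(σ_p ρ)|, the sum ranging over all non-identity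
Pauli strings. -/
theorem traceNorm_diff_le_sum_pauli (n : ℕ)
    (ρ τ : Matrix (Fin n → Fin 2) (Fin n → Fin 2) ℂ)
    (hρ : ρ.IsHermitian) (hτ : τ.IsHermitian) (htr : ρ.trace = τ.trace) :
    traceNorm (τ - ρ) ≤
      ∑ p ∈ Finset.univ.filter (fun p : Fin n → Fin 4 => p ≠ fun _ => 0),
        ‖(pauliN p * τ).trace - (pauliN p * ρ).trace‖ := by
  have hM : (τ - ρ).IsHermitian := hτ.sub hρ
  set M := τ - ρ with hMdef
  have htrM : M.trace = 0 := by rw [hMdef, trace_sub, htr, sub_self]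
  set lam := hM.eigenvalues with hlam
  set U : Matrix (Fin n → Fin 2) (Fin n → Fin 2) ℂ := ((hM.eigenvectorUnitary : unitaryGroup (Fin n → Fin 2) ℂ) : Matrix (Fin n → Fin 2) (Fin n → Fin 2) ℂ) with hUdef
  have hUU : Uᴴ * U = 1 := by
    rw [hUdef, ← Matrix.star_eq_conjTranspose]
    exact Matrix.mem_unitaryGroup_iff'.mp hM.eigenvectorUnitary.2
  have hUU' : U * Uᴴ = 1 := by
    rw [hUdef, ← Matrix.star_eq_conjTranspose]
    exact Matrix.mem_unitaryGroup_iff.mp hM.eigenvectorUnitary.2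
  have key : ∀ A B : Matrix (Fin n → Fin 2) (Fin n → Fin 2) ℂ,
      (Uᴴ * A * U) * (Uᴴ * B * U) = Uᴴ * (A * B) * U := by
    intro A B
    calc (Uᴴ * A * U) * (Uᴴ * B * U) = Uᴴ * A * ((U * Uᴴ) * (B * U)) := by
          simp only [Matrix.mul_assoc]
      _ = Uᴴ * (A * B) * U := by rw [hUU', Matrix.one_mul]; simp only [Matrix.mul_assoc]
  set W : (Fin n → Fin 4) → Matrix (Fin n → Fin 2) (Fin n → Fin 2) ℂ :=
    fun p => Uᴴ * pauliN p * U with hWdef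
  set c : (Fin n → Fin 4) → ℂ := fun p => (pauliN p * M).trace with hcdef
  -- |W p i i| ≤ 1
  have hWbound : ∀ p i, ‖W p i i‖ ≤ 1 := by
    intro p i
    have hWu : (W p)ᴴ * W p = 1 := by
      have hWc : (W p)ᴴ = Uᴴ * (pauliN p)ᴴ * U := by
        rw [hWdef]; simp [conjTranspose_mul, Matrix.mul_assoc]
      rw [hWdef, hWc, key, pauliN_unitary, Matrix.mul_one, hUU]
    have h1 : (1 : ℝ) = ∑ j, Complex.normSq (W p j i) := by
      have h0 : ((W p)ᴴ * W p) i i = (1 : Matrix (Fin n → Fin 2) (Fin n → Fin 2) ℂ) i i := by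
        rw [hWu]
      rw [Matrix.one_apply_eq, mul_apply] at h0
      have h0' : (1 : ℂ) = ∑ j, (Complex.normSq (W p j i) : ℂ) := by
        rw [← h0]
        congr 1; ext j
        rw [conjTranspose_apply, Complex.star_def, Complex.normSq_eq_conj_mul_self]
      exact_mod_cast congrArg Complex.re h0'
    have h2 : Complex.normSq (W p i i) ≤ 1 := by
      rw [h1]
      exact Finset.single_le_sum (f := fun j => Complex.normSq (W p j i))
        (fun j _ => Complex.normSq_nonneg _) (Finset.mem_univ i)
    rw [← Complex.sq_norm] at h2
    nlinarith [norm_nonneg (W p i i)]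
  -- diagonalization entries
  have hdiag : Uᴴ * M * U = diagonal (fun i => (lam i : ℂ)) := by
    have hspec : M = U * diagonal (fun i => (lam i : ℂ)) * Uᴴ := by
      simpa [Matrix.star_eq_conjTranspose, Function.comp_def] using hM.spectral_theorem
    rw [hspec]; simp only [Matrix.mul_assoc]
    rw [← Matrix.mul_assoc Uᴴ U, hUU, Matrix.one_mul, Matrix.mul_one]
  -- Pauli expansion conjugated
  have hexp : ∀ i, ((2:ℂ) ^ n) * (lam i : ℂ) = ∑ p : Fin n → Fin 4, c p * W p i i := by
    intro i
    have hS : (∑ p : Fin n → Fin 4, c p • pauliN p) = (2:ℂ) ^ n • M := by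
      ext s t
      rw [Matrix.sum_apply, Matrix.smul_apply, smul_eq_mul]
      simp only [Matrix.smul_apply, smul_eq_mul]
      exact pauliN_expand M s t
    have hS2 : Uᴴ * ((2:ℂ) ^ n • M) * U = ∑ p : Fin n → Fin 4, c p • W p := by
      rw [← hS, Matrix.mul_sum, Finset.sum_mul]
      congr 1; ext p
      rw [hWdef, Matrix.mul_smul, Matrix.smul_mul]
    have hL : Uᴴ * ((2:ℂ) ^ n • M) * U = (2:ℂ) ^ n • (Uᴴ * M * U) := by
      rw [Matrix.mul_smul, Matrix.smul_mul]
    rw [hL, hdiag] at hS2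
    have h3 : ((2:ℂ) ^ n • diagonal (fun i => (lam i : ℂ))) i i
        = (∑ p : Fin n → Fin 4, c p • W p) i i := by rw [hS2]
    rw [Matrix.smul_apply, diagonal_apply_eq, smul_eq_mul] at h3
    rw [h3, Matrix.sum_apply]
    simp [Matrix.smul_apply]
  -- drop the identity term
  set F := Finset.univ.filter (fun p : Fin n → Fin 4 => p ≠ fun _ => 0) with hF
  have hrestrict : ∀ i, ∑ p ∈ F, c p * W p i i = ∑ p : Fin n → Fin 4, c p * W p i i := by
    intro i
    apply Finset.sum_subset (Finset.filter_subset _ _)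
    intro p _ hp
    have hp0 : p = fun _ => 0 := by
      by_contra h
      exact hp (Finset.mem_filter.mpr ⟨Finset.mem_univ _, h⟩)
    have : c p = 0 := by rw [hcdef, hp0]; simp [pauliN_zero, htrM]
    rw [this, zero_mul]
  -- per-eigenvalue bound
  have hkey : ∀ i, (2:ℝ) ^ n * |lam i| ≤ ∑ p ∈ F, ‖c p‖ := by
    intro i
    have e1 : (2:ℝ) ^ n * |lam i| = ‖((2:ℂ) ^ n) * (lam i : ℂ)‖ := by
      rw [norm_mul, norm_pow, Complex.norm_two, Complex.norm_real, Real.norm_eq_abs]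
    rw [e1, hexp i, ← hrestrict i]
    calc ‖∑ p ∈ F, c p * W p i i‖ ≤ ∑ p ∈ F, ‖c p * W p i i‖ :=
          norm_sum_le _ _
      _ ≤ ∑ p ∈ F, ‖c p‖ := by
          apply Finset.sum_le_sum
          intro p _
          rw [norm_mul]
          exact mul_le_of_le_one_right (norm_nonneg _) (hWbound p i)
  -- assemble
  have hcard : (Fintype.card (Fin n → Fin 2) : ℝ) = 2 ^ n := by
    simp [Fintype.card_fun]
  have hsum : (2:ℝ) ^ n * ∑ i, |lam i| ≤ (2:ℝ) ^ n * ∑ p ∈ F, ‖c p‖ := by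
    rw [Finset.mul_sum]
    calc (∑ i, (2:ℝ) ^ n * |lam i|) ≤ ∑ _i : Fin n → Fin 2, ∑ p ∈ F, ‖c p‖ :=
          Finset.sum_le_sum fun i _ => hkey i
      _ = (2:ℝ) ^ n * ∑ p ∈ F, ‖c p‖ := by
          rw [Finset.sum_const, nsmul_eq_mul, ← hcard]
          norm_num
  have hfinal : ∑ i, |lam i| ≤ ∑ p ∈ F, ‖c p‖ :=
    le_of_mul_le_mul_left hsum (by positivity)
  rw [traceNorm_hermitian hM]
  refine hfinal.trans_eq ?_
  apply Finset.sum_congr rfl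
  intro p _
  rw [hcdef]
  simp only [hMdef]
  rw [Matrix.mul_sub, trace_sub]
end

section
/- Let F_1, …, F_D be N×N complex Hermitian matrices. Then the minimum over x ∈ [−1,1]^D of λ_max(I + ∑_{p=1}^D x_p F_p) equals the supremum over all N×N density matrices Z of the quantity 1 − ∑_{p=1}^D |Tr(Z F_p)|. (Both sides are attained; in particular Tr(Z F_p) is real since Z and F_p are Hermitian.) -/
open Matrix
open scoped ComplexOrder

section Aux

lemma psd_diag_nonneg_s8 {n : ℕ} {A : Matrix (Fin n) (Fin n) ℂ} (hA : A.PosSemidef) (i : Fin n) :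
    0 ≤ A i i := by
  simpa [Matrix.mulVec_single, Pi.single_apply, dotProduct] using hA.dotProduct_mulVec_nonneg (Pi.single i 1)

lemma psd_trace_nonneg_s8 {n : ℕ} {A : Matrix (Fin n) (Fin n) ℂ} (hA : A.PosSemidef) :
    0 ≤ A.trace :=
  Finset.sum_nonneg fun i _ => psd_diag_nonneg_s8 hA i

lemma trace_mul_psd_nonneg {n : ℕ} {A B : Matrix (Fin n) (Fin n) ℂ}
    (hA : A.PosSemidef) (hB : B.PosSemidef) : 0 ≤ (A * B).trace := by
  open scoped MatrixOrder in
  obtain ⟨C, rfl⟩ := CStarAlgebra.nonneg_iff_eq_star_mul_self.mp hB.nonneg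
  rw [Matrix.star_eq_conjTranspose]
  have h1 : (A * (Cᴴ * C)).trace = (C * A * Cᴴ).trace := by
    rw [← Matrix.trace_mul_cycle, ← mul_assoc]
  rw [h1]
  exact psd_trace_nonneg_s8 (hA.mul_mul_conjTranspose_same C)

lemma trace_mul_herm_real {n : ℕ} {A B : Matrix (Fin n) (Fin n) ℂ}
    (hA : A.IsHermitian) (hB : B.IsHermitian) :
    ((A * B).trace : ℂ) = (((A * B).trace).re : ℝ) := by
  have h : star ((A * B).trace) = (A * B).trace := by
    rw [← Matrix.trace_conjTranspose, Matrix.conjTranspose_mul, hA.eq, hB.eq,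
      Matrix.trace_mul_comm]
  have him : ((A * B).trace).im = 0 := by
    have := congrArg Complex.im h
    simp at this
    linarith
  exact (Complex.ext (by simp) (by simp [him])).symm

end Aux

/-- The largest eigenvalue of a Hermitian matrix. -/
noncomputable def lamMax {N : ℕ} {M : Matrix (Fin N) (Fin N) ℂ}
    (hM : M.IsHermitian) : ℝ :=
  ⨆ i, hM.eigenvalues i

section LamMax

lemma lamMax_smul_one_sub_psd {N : ℕ} (hN : 0 < N) {M : Matrix (Fin N) (Fin N) ℂ}
    (hM : M.IsHermitian) :
    (((lamMax hM : ℝ) : ℂ) • (1 : Matrix (Fin N) (Fin N) ℂ) - M).PosSemidef := by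
  haveI : Nonempty (Fin N) := ⟨⟨0, hN⟩⟩
  have hle : ∀ i, hM.eigenvalues i ≤ lamMax hM := fun i =>
    le_ciSup (Set.Finite.bddAbove (Set.finite_range _)) i
  set U : Matrix (Fin N) (Fin N) ℂ := (hM.eigenvectorUnitary : Matrix (Fin N) (Fin N) ℂ)
  have hU : U * star U = 1 := (Matrix.mem_unitaryGroup_iff).mp hM.eigenvectorUnitary.2
  obtain ⟨lam, hlam⟩ : ∃ l : ℝ, l = lamMax hM := ⟨_, rfl⟩
  obtain ⟨ev, hev⟩ : ∃ e : Fin N → ℝ, e = hM.eigenvalues := ⟨_, rfl⟩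
  have hspec : M = U * Matrix.diagonal (RCLike.ofReal ∘ ev) * star U := by
    rw [hev]; exact hM.spectral_theorem
  simp only [← hlam, ← hev] at hle ⊢
  have h1 : ((lam : ℂ)) • (1 : Matrix (Fin N) (Fin N) ℂ) - M
      = U * Matrix.diagonal (fun i => ((lam : ℂ) - (ev i : ℂ))) * star U := by
    rw [hspec]
    have : ((lam : ℂ)) • (1 : Matrix (Fin N) (Fin N) ℂ)
        = U * ((lam : ℂ) • (1 : Matrix (Fin N) (Fin N) ℂ)) * star U := by
      rw [Matrix.mul_smul, Matrix.smul_mul, mul_one, hU]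
    rw [this]
    rw [← Matrix.sub_mul, ← Matrix.mul_sub]
    have hd : (lam : ℂ) • (1 : Matrix (Fin N) (Fin N) ℂ) - Matrix.diagonal (RCLike.ofReal ∘ ev)
        = Matrix.diagonal (fun i => ((lam : ℂ) - (ev i : ℂ))) := by
      ext i j
      by_cases h : i = j <;>
        simp [Matrix.diagonal_apply, h, Matrix.one_apply, Function.comp]
    rw [hd]
  rw [h1]
  have : (Matrix.diagonal (fun i => ((lam : ℂ) - (ev i : ℂ)))).PosSemidef := by
    refine Matrix.posSemidef_diagonal_iff.mpr fun i => ?_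
    rw [← Complex.ofReal_sub]
    rw [Complex.zero_le_real]
    linarith [hle i]
  have h2 := this.mul_mul_conjTranspose_same U
  simpa [Matrix.star_eq_conjTranspose] using h2

lemma re_trace_mul_le_lamMax {N : ℕ} (hN : 0 < N) {M Z : Matrix (Fin N) (Fin N) ℂ}
    (hM : M.IsHermitian) (hZ : Z.PosSemidef) (hZt : Z.trace = 1) :
    ((Z * M).trace).re ≤ lamMax hM := by
  have h0 := trace_mul_psd_nonneg hZ (lamMax_smul_one_sub_psd hN hM)
  have h1 : (Z * (((lamMax hM : ℝ) : ℂ) • 1 - M)).trace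
      = ((lamMax hM : ℝ) : ℂ) - (Z * M).trace := by
    rw [mul_sub, Matrix.trace_sub, mul_smul_comm, mul_one, Matrix.trace_smul, hZt]
    simp
  rw [h1] at h0
  have := (Complex.nonneg_iff.mp h0).1
  simp at this
  linarith

lemma exists_density_trace_eq_lamMax {N : ℕ} (hN : 0 < N) {M : Matrix (Fin N) (Fin N) ℂ}
    (hM : M.IsHermitian) :
    ∃ Z : Matrix (Fin N) (Fin N) ℂ, Z.PosSemidef ∧ Z.trace = 1 ∧
      (Z * M).trace = ((lamMax hM : ℝ) : ℂ) := by
  haveI : Nonempty (Fin N) := ⟨⟨0, hN⟩⟩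
  obtain ⟨i0, hi0⟩ := exists_eq_ciSup_of_finite (f := hM.eigenvalues)
  set v : Fin N → ℂ := ⇑(hM.eigenvectorBasis i0) with hv
  have hvv : dotProduct (star v) v = 1 := by
    have hn : ‖hM.eigenvectorBasis i0‖ = 1 := hM.eigenvectorBasis.orthonormal.1 i0
    rw [EuclideanSpace.norm_eq] at hn
    have h3 : (0:ℝ) ≤ ∑ i, ‖(hM.eigenvectorBasis i0) i‖ ^ 2 :=
      Finset.sum_nonneg fun i _ => sq_nonneg _
    have h2 : (∑ i, ‖(hM.eigenvectorBasis i0) i‖ ^ 2) = 1 := by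
      nlinarith [Real.sq_sqrt h3]
    have h4 : dotProduct (star v) v
        = ((∑ i, ‖(hM.eigenvectorBasis i0) i‖ ^ 2 : ℝ) : ℂ) := by
      rw [Complex.ofReal_sum]
      apply Finset.sum_congr rfl; intro i _
      show star (v i) * v i = _
      rw [show star (v i) = (starRingEnd ℂ) (v i) from rfl, mul_comm, Complex.mul_conj,
        Complex.normSq_eq_norm_sq]
    rw [h4, h2]; norm_num
  have htrv : (Matrix.vecMulVec v (star v)).trace = 1 := by
    rw [Matrix.trace]
    simp only [Matrix.diag_apply, Matrix.vecMulVec_apply]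
    rw [dotProduct] at hvv
    rw [← hvv]
    apply Finset.sum_congr rfl; intros; ring
  refine ⟨Matrix.vecMulVec v (star v), ?_, htrv, ?_⟩
  · have : Matrix.vecMulVec v (star v) = Matrix.replicateCol Unit v * (Matrix.replicateCol Unit v)ᴴ := by
      rw [Matrix.conjTranspose_replicateCol, Matrix.vecMulVec_eq Unit]
    rw [this]
    exact Matrix.posSemidef_self_mul_conjTranspose _
  · have htr : (Matrix.vecMulVec v (star v) * M).trace
        = dotProduct (star v) (M *ᵥ v) := by
      rw [Matrix.trace_mul_comm]
      simp only [Matrix.trace, Matrix.diag_apply, Matrix.mul_apply, Matrix.vecMulVec_apply,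
        dotProduct, Matrix.mulVec, Finset.mul_sum]
      apply Finset.sum_congr rfl; intros
      apply Finset.sum_congr rfl; intros; ring
    rw [htr]
    have hmv : M *ᵥ v = (hM.eigenvalues i0) • v := hM.mulVec_eigenvectorBasis i0
    rw [hmv, dotProduct_smul, hvv]
    have h5 : lamMax hM = hM.eigenvalues i0 := hi0.symm
    rw [h5]
    simp [Complex.real_smul]

end LamMax

section Compactness

lemma density_entry_bound {N : ℕ} {Z : Matrix (Fin N) (Fin N) ℂ}
    (hZ : Z.PosSemidef) (hZt : Z.trace = 1) (i j : Fin N) : ‖Z i j‖ ≤ 1 := by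
  classical
  have hdiag : ∀ k, 0 ≤ Z k k := fun k => psd_diag_nonneg_s8 hZ k
  have hdre : ∀ k, 0 ≤ (Z k k).re := fun k => (Complex.nonneg_iff.mp (hdiag k)).1
  have hsum : ∑ k, (Z k k).re = 1 := by
    have := congrArg Complex.re hZt
    simpa [Matrix.trace, Complex.re_sum] using this
  have hle1 : ∀ k, (Z k k).re ≤ 1 := by
    intro k
    rw [← hsum]
    exact Finset.single_le_sum (fun m _ => hdre m) (Finset.mem_univ k)
  set e : Fin 2 → Fin N := ![i, j] with he
  have hsub : (Z.submatrix e e).PosSemidef := hZ.submatrix e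
  have hdet : 0 ≤ (Z.submatrix e e).det := by
    rw [hsub.1.det_eq_prod_eigenvalues]
    exact Finset.prod_nonneg fun k _ => by
      rw [RCLike.ofReal_nonneg]; exact hsub.eigenvalues_nonneg k
  have hdet2 : (Z.submatrix e e).det = Z i i * Z j j - Z i j * Z j i := by
    rw [Matrix.det_fin_two]
    simp [he]
  have hji : Z j i = star (Z i j) := by
    have := hZ.1
    rw [Matrix.IsHermitian] at this
    conv_lhs => rw [← this]
    simp [Matrix.conjTranspose_apply]
  have hre := (Complex.nonneg_iff.mp hdet).1
  rw [hdet2, hji] at hre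
  have him_i : (Z i i).im = 0 := ((Complex.nonneg_iff.mp (hdiag i)).2).symm
  have hstar : (Z i j * star (Z i j)).re = Complex.normSq (Z i j) := by
    rw [show star (Z i j) = (starRingEnd ℂ) (Z i j) from rfl, Complex.mul_conj]
    simp
  have h1 : Complex.normSq (Z i j) ≤ (Z i i).re * (Z j j).re := by
    have : (Z i i * Z j j - Z i j * star (Z i j)).re
        = (Z i i).re * (Z j j).re - Complex.normSq (Z i j) := by
      rw [Complex.sub_re, Complex.mul_re, him_i, hstar]; ring
    rw [this] at hre
    linarith
  have h2 : Complex.normSq (Z i j) ≤ 1 := by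
    calc Complex.normSq (Z i j) ≤ (Z i i).re * (Z j j).re := h1
    _ ≤ 1 := by nlinarith [hdre i, hdre j, hle1 i, hle1 j]
  rw [← Complex.sq_norm] at h2
  nlinarith [norm_nonneg (Z i j)]

lemma density_isCompact (N : ℕ) :
    IsCompact {Z : Matrix (Fin N) (Fin N) ℂ | Z.PosSemidef ∧ Z.trace = 1} := by
  classical
  have hsubset : {Z : Matrix (Fin N) (Fin N) ℂ | Z.PosSemidef ∧ Z.trace = 1}
      ⊆ Set.univ.pi fun _ : Fin N => Set.univ.pi fun _ : Fin N => Metric.closedBall (0:ℂ) 1 := by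
    rintro Z ⟨hZ, hZt⟩ i _ j _
    simpa [Complex.dist_eq] using density_entry_bound hZ hZt i j
  have hK : IsCompact (Set.univ.pi fun _ : Fin N =>
      Set.univ.pi fun _ : Fin N => Metric.closedBall (0:ℂ) 1) :=
    isCompact_univ_pi fun _ => isCompact_univ_pi fun _ => isCompact_closedBall _ _
  refine hK.of_isClosed_subset ?_ hsubset
  have h1 : IsClosed {Z : Matrix (Fin N) (Fin N) ℂ | Z.IsHermitian} := by
    have : Continuous fun Z : Matrix (Fin N) (Fin N) ℂ => Zᴴ :=
      Continuous.matrix_conjTranspose continuous_id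
    exact isClosed_eq this continuous_id
  have h2 : ∀ x : Fin N → ℂ, IsClosed {Z : Matrix (Fin N) (Fin N) ℂ |
      0 ≤ dotProduct (star x) (Z *ᵥ x)} := by
    intro x
    have hc : Continuous fun Z : Matrix (Fin N) (Fin N) ℂ =>
        dotProduct (star x) (Z *ᵥ x) := by
      simp only [dotProduct, Matrix.mulVec]
      apply continuous_finset_sum; intro i _
      apply Continuous.mul continuous_const
      apply continuous_finset_sum; intro j _
      exact (continuous_id.matrix_elem i j).mul continuous_const
    have hcl : IsClosed {z : ℂ | 0 ≤ z} := by
      have : {z : ℂ | 0 ≤ z} = Complex.re ⁻¹' Set.Ici 0 ∩ Complex.im ⁻¹' {0} := by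
        ext z
        simp [Complex.nonneg_iff, eq_comm]
      rw [this]
      exact (IsClosed.preimage Complex.continuous_re isClosed_Ici).inter
        (IsClosed.preimage Complex.continuous_im isClosed_singleton)
    exact hcl.preimage hc
  have h3 : IsClosed {Z : Matrix (Fin N) (Fin N) ℂ | Z.trace = 1} :=
    isClosed_eq (Continuous.matrix_trace continuous_id) continuous_const
  have : {Z : Matrix (Fin N) (Fin N) ℂ | Z.PosSemidef ∧ Z.trace = 1}
      = ({Z | Z.IsHermitian} ∩ ⋂ x : Fin N → ℂ,
          {Z | 0 ≤ dotProduct (star x) (Z *ᵥ x)}) ∩ {Z | Z.trace = 1} := by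
    ext Z
    simp only [Set.mem_setOf_eq, Set.mem_inter_iff, Set.mem_iInter, Matrix.posSemidef_iff_dotProduct_mulVec]
    try tauto
  rw [this]
  exact ((h1.inter (isClosed_iInter h2)).inter h3)

end Compactness

lemma box_separation {D : ℕ} {C : Set (Fin D → ℝ)} (hC : Convex ℝ C)
    {c0 : Fin D → ℝ} (hc0 : c0 ∈ C) {r : ℝ} (hr : 0 < r)
    (hmin : ∀ c ∈ C, r ≤ ∑ p, |c p|) :
    ∃ x : Fin D → ℝ, (∀ p, |x p| ≤ 1) ∧ ∀ c ∈ C, ∑ p, x p * c p ≤ -r := by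
  classical
  rcases Nat.eq_zero_or_pos D with hD | hD
  · exfalso
    have := hmin c0 hc0
    subst hD
    simp at this
    linarith
  haveI : Nonempty (Fin D) := ⟨⟨0, hD⟩⟩
  set A : Set (Fin D → ℝ) := {a | ∑ p, |a p| < r} with hA
  have hconv : Convex ℝ A := by
    intro a ha b hb t s ht hs hts
    have h1 : ∑ p, |t • a p + s • b p| ≤ t * (∑ p, |a p|) + s * (∑ p, |b p|) := by
      rw [Finset.mul_sum, Finset.mul_sum, ← Finset.sum_add_distrib]
      apply Finset.sum_le_sum
      intro p _
      calc |t • a p + s • b p| ≤ |t • a p| + |s • b p| := abs_add_le _ _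
      _ = t * |a p| + s * |b p| := by
          simp [abs_mul, abs_of_nonneg ht, abs_of_nonneg hs, smul_eq_mul]
    have h2 : t * (∑ p, |a p|) + s * (∑ p, |b p|) < r :=
      convex_Iio r ha hb ht hs hts
    show ∑ p, |(t • a + s • b) p| < r
    calc ∑ p, |(t • a + s • b) p| = ∑ p, |t • a p + s • b p| := by
          apply Finset.sum_congr rfl; intros; simp
    _ ≤ _ := h1
    _ < r := h2
  have hopen : IsOpen A := by
    have hcont : Continuous fun a : Fin D → ℝ => ∑ p, |a p| :=
      continuous_finset_sum _ fun p _ => (continuous_apply p).abs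
    exact isOpen_Iio.preimage hcont
  have hdisj : Disjoint A C := by
    rw [Set.disjoint_left]
    intro a haA haC
    exact absurd (hmin a haC) (not_le.mpr haA)
  obtain ⟨f, s, hfA, hfC⟩ := geometric_hahn_banach_open hconv hopen hC hdisj
  have hs0 : 0 < s := by
    have h0 : (0 : Fin D → ℝ) ∈ A := by simp [hA, hr]
    simpa using hfA 0 h0
  set y : Fin D → ℝ := fun p => f (Pi.single p 1) with hy
  have hfc : ∀ c : Fin D → ℝ, f c = ∑ p, c p * y p := by
    intro c
    have hc : c = ∑ p, Pi.single p (c p) := by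
      rw [Finset.univ_sum_single]
    rw [hc]
    rw [map_sum]
    apply Finset.sum_congr rfl; intro p _
    have : Pi.single p (c p) = c p • (Pi.single p (1:ℝ) : Fin D → ℝ) := by
      rw [← Pi.single_smul, smul_eq_mul, mul_one]
    rw [this, _root_.map_smul, smul_eq_mul]
    simp [hy, Finset.univ_sum_single]
  have hry : ∀ p, r * |y p| ≤ s := by
    intro p
    rcases eq_or_lt_of_le (abs_nonneg (y p)) with h0 | h0
    · rw [← h0]; nlinarith
    by_contra hcon
    push_neg at hcon
    set t : ℝ := (r + s / |y p|) / 2 with ht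
    have hts : s / |y p| < r := by
      rw [div_lt_iff₀ h0]; linarith
    have ht0 : 0 ≤ t := by
      have : 0 < s / |y p| := div_pos hs0 h0
      rw [ht]; linarith
    have htr : t < r := by rw [ht]; linarith
    set σ : ℝ := if y p < 0 then -1 else 1 with hσ
    have hσy : σ * y p = |y p| := by
      rcases lt_or_ge (y p) 0 with h | h
      · simp [hσ, h, abs_of_neg h]
      · simp [hσ, not_lt.mpr h, abs_of_nonneg h]
    have hmem : (t * σ) • (Pi.single p (1:ℝ) : Fin D → ℝ) ∈ A := by
      show ∑ q, |((t * σ) • (Pi.single p (1:ℝ) : Fin D → ℝ)) q| < r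
      have : ∀ q, |((t * σ) • (Pi.single p (1:ℝ) : Fin D → ℝ)) q| = if q = p then t else 0 := by
        have habs : |σ| = 1 := by
          rcases lt_or_ge (y p) 0 with hh | hh
          · simp [hσ, hh]
          · simp [hσ, not_lt.mpr hh]
        intro q
        by_cases h : q = p
        · subst h
          simp [abs_mul, abs_of_nonneg ht0, habs]
        · simp [Pi.single_apply, h]
      rw [Finset.sum_congr rfl fun q _ => this q]
      simp [htr]
    have := hfA _ hmem
    rw [_root_.map_smul, smul_eq_mul] at this
    have hyp : f (Pi.single p 1) = y p := rfl
    rw [hyp] at this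
    have : t * |y p| < s := by rw [← hσy]; linarith [this]
    have htq : s / |y p| < t := by rw [ht]; linarith
    rw [div_lt_iff₀ h0] at htq
    nlinarith
  set M : ℝ := Finset.univ.sup' Finset.univ_nonempty (fun p => |y p|) with hM
  have hMle : ∀ p, |y p| ≤ M := fun p =>
    Finset.le_sup' (fun q => |y q|) (Finset.mem_univ p)
  have hM0 : 0 < M := by
    by_contra hcon
    push_neg at hcon
    have h1 : s ≤ f c0 := hfC c0 hc0
    have h2 : f c0 ≤ 0 := by
      rw [hfc c0]
      apply Finset.sum_nonpos
      intro p _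
      have : |c0 p * y p| ≤ 0 := by
        rw [abs_mul]
        have : |y p| ≤ 0 := le_trans (hMle p) hcon
        nlinarith [abs_nonneg (c0 p), abs_nonneg (y p)]
      nlinarith [le_abs_self (c0 p * y p)]
    linarith
  have hrM : r * M ≤ s := by
    rw [hM, mul_comm]
    rw [← le_div_iff₀ hr] at *
    apply Finset.sup'_le
    intro p _
    rw [le_div_iff₀ hr, mul_comm]
    exact hry p
  refine ⟨fun p => -(y p) / M, fun p => ?_, fun c hc => ?_⟩
  · rw [abs_div, abs_neg, abs_of_pos hM0, div_le_one hM0]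
    exact hMle p
  · have h1 : s ≤ f c := hfC c hc
    rw [hfc c] at h1
    have h2 : ∑ p, (-(y p) / M) * c p = (-(∑ p, c p * y p)) / M := by
      rw [← Finset.sum_neg_distrib, Finset.sum_div]
      apply Finset.sum_congr rfl; intros; ring
    rw [h2, div_le_iff₀ hM0]
    nlinarith

/-- min_{x ∈ [-1,1]^D} λ_max(I + ∑_p x_p F_p)
= max over density matrices Z of (1 − ∑_p |Tr(Z F_p)|), both attained. -/
theorem minimax_duality_box (D N : ℕ) (hN : 0 < N)
    (F : Fin D → Matrix (Fin N) (Fin N) ℂ) (hF : ∀ p, (F p).IsHermitian) :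
    ∃ v : ℝ,
      IsLeast {w : ℝ | ∃ x : Fin D → ℝ, (∀ p, x p ∈ Set.Icc (-1 : ℝ) 1) ∧
          ∃ h : ((1 : Matrix (Fin N) (Fin N) ℂ) + ∑ p, (x p : ℂ) • F p).IsHermitian,
            lamMax h = w} v ∧
      IsGreatest {w : ℝ | ∃ Z : Matrix (Fin N) (Fin N) ℂ,
          Z.IsHermitian ∧ Z.PosSemidef ∧ Z.trace = 1 ∧
          w = 1 - ∑ p, ‖(Z * F p).trace‖} v := by
  classical
  set S : Set (Matrix (Fin N) (Fin N) ℂ) := {Z | Z.PosSemidef ∧ Z.trace = 1} with hSdef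
  have hScompact : IsCompact S := density_isCompact N
  -- S nonempty
  have hS0 : ((((N:ℝ)⁻¹ : ℝ) : ℂ) • (1 : Matrix (Fin N) (Fin N) ℂ)) ∈ S := by
    have hN0 : ((N:ℝ) : ℂ) ≠ 0 := by
      have : (N:ℝ) ≠ 0 := Nat.cast_ne_zero.mpr (Nat.pos_iff_ne_zero.mp hN)
      exact_mod_cast this
    constructor
    · refine Matrix.PosSemidef.of_dotProduct_mulVec_nonneg ?_ ?_
      · show _ᴴ = _
        simp [Matrix.conjTranspose_smul, Complex.star_def, Complex.conj_ofReal]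
      · intro x
        rw [Matrix.smul_mulVec, Matrix.one_mulVec, dotProduct_smul, smul_eq_mul]
        apply mul_nonneg
        · rw [Complex.zero_le_real]
          positivity
        · exact dotProduct_star_self_nonneg x
    · show Matrix.trace _ = 1
      rw [Matrix.trace_smul, Matrix.trace_one, smul_eq_mul]
      simp only [Fintype.card_fin]
      have : (N:ℝ) ≠ 0 := Nat.cast_ne_zero.mpr (Nat.pos_iff_ne_zero.mp hN)
      push_cast
      field_simp
  have hSne : S.Nonempty := ⟨_, hS0⟩
  -- convexity of S
  have hsmcast : ∀ (r : ℝ) (Z : Matrix (Fin N) (Fin N) ℂ), r • Z = ((r:ℝ):ℂ) • Z := by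
    intro r Z; ext i j
    simp [Complex.real_smul]
  have hSconv : Convex ℝ S := by
    rintro Z1 ⟨h1, t1⟩ Z2 ⟨h2, t2⟩ a b ha hb hab
    refine ⟨Matrix.PosSemidef.of_dotProduct_mulVec_nonneg ?_ ?_, ?_⟩
    · show _ᴴ = _
      rw [hsmcast a, hsmcast b]
      simp [Matrix.conjTranspose_add, Matrix.conjTranspose_smul, Complex.star_def,
        Complex.conj_ofReal, h1.1.eq, h2.1.eq]
    · intro x
      rw [hsmcast a, hsmcast b, Matrix.add_mulVec, Matrix.smul_mulVec,
        Matrix.smul_mulVec, dotProduct_add, dotProduct_smul,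
        dotProduct_smul, smul_eq_mul, smul_eq_mul]
      apply add_nonneg
      · exact mul_nonneg (Complex.zero_le_real.mpr ha) (h1.dotProduct_mulVec_nonneg x)
      · exact mul_nonneg (Complex.zero_le_real.mpr hb) (h2.dotProduct_mulVec_nonneg x)
    · show Matrix.trace _ = 1
      rw [hsmcast a, hsmcast b, Matrix.trace_add, Matrix.trace_smul, Matrix.trace_smul,
        t1, t2, smul_eq_mul, smul_eq_mul, mul_one, mul_one, ← Complex.ofReal_add, hab]
      norm_num
  -- the linear image
  set φ : Matrix (Fin N) (Fin N) ℂ → (Fin D → ℝ) := fun Z p => ((Z * F p).trace).re with hφ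
  have hφcont : Continuous φ := continuous_pi fun p =>
    Complex.continuous_re.comp ((continuous_id.matrix_mul continuous_const).matrix_trace)
  have hφlin : IsLinearMap ℝ φ := by
    constructor
    · intro Z1 Z2; funext p
      show (((Z1 + Z2) * F p).trace).re = _
      rw [Matrix.add_mul, Matrix.trace_add, Complex.add_re]
      rfl
    · intro a Z; funext p
      show ((a • Z * F p).trace).re = a * ((Z * F p).trace).re
      rw [hsmcast a, Matrix.smul_mul, Matrix.trace_smul, smul_eq_mul, Complex.mul_re]
      simp
  set Cs : Set (Fin D → ℝ) := φ '' S with hCs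
  have hCcomp : IsCompact Cs := hScompact.image hφcont
  have hCconv : Convex ℝ Cs := hSconv.is_linear_image hφlin
  have hCne : Cs.Nonempty := hSne.image φ
  have hnorm1cont : Continuous fun c : Fin D → ℝ => ∑ p, |c p| :=
    continuous_finset_sum _ fun p _ => (continuous_apply p).abs
  obtain ⟨cstar, hcstarC, hminOn⟩ := hCcomp.exists_isMinOn hCne hnorm1cont.continuousOn
  obtain ⟨Zs, hZsS, hZsc⟩ := hcstarC
  set r : ℝ := ∑ p, |cstar p| with hr
  have hminC : ∀ c ∈ Cs, r ≤ ∑ p, |c p| := fun c hc => hminOn hc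
  have hr0 : 0 ≤ r := Finset.sum_nonneg fun p _ => abs_nonneg _
  -- Hermitian witnesses
  have hMx : ∀ x : Fin D → ℝ,
      ((1 : Matrix (Fin N) (Fin N) ℂ) + ∑ p, (x p : ℂ) • F p).IsHermitian := by
    intro x
    apply Matrix.isHermitian_one.add
    show _ᴴ = _
    rw [Matrix.conjTranspose_sum]
    apply Finset.sum_congr rfl; intro p _
    rw [Matrix.conjTranspose_smul, Complex.star_def, Complex.conj_ofReal, (hF p).eq]
  -- key trace computation
  have key : ∀ (x : Fin D → ℝ) (Z : Matrix (Fin N) (Fin N) ℂ), Z ∈ S →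
      ((Z * ((1 : Matrix (Fin N) (Fin N) ℂ) + ∑ p, (x p : ℂ) • F p)).trace).re
        = 1 + ∑ p, x p * φ Z p := by
    intro x Z hZ
    rw [mul_add, mul_one, Matrix.trace_add, Finset.mul_sum, Matrix.trace_sum]
    simp only [mul_smul_comm, Matrix.trace_smul]
    rw [Complex.add_re, Complex.re_sum]
    congr 1
    · rw [hZ.2]; simp
    · apply Finset.sum_congr rfl; intro p _
      rw [smul_eq_mul, Complex.mul_re]
      simp [hφ]
  -- abs identity
  have habs : ∀ Z ∈ S, ∀ p, ‖(Z * F p).trace‖ = |φ Z p| := by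
    intro Z hZ p
    have h := trace_mul_herm_real hZ.1.1 (hF p)
    conv_lhs => rw [h]
    rw [Complex.norm_real, Real.norm_eq_abs]
  refine ⟨1 - r, ⟨?_, ?_⟩, ⟨Zs, hZsS.1.1, hZsS.1, hZsS.2, ?_⟩, ?_⟩
  -- primal membership: construct x*
  · obtain ⟨x, hxbox, hxC⟩ : ∃ x : Fin D → ℝ,
        (∀ p, |x p| ≤ 1) ∧ ∀ c ∈ Cs, ∑ p, x p * c p ≤ -r := by
      rcases eq_or_lt_of_le hr0 with h0 | h0
      · exact ⟨0, by simp, fun c hc => by simp [← h0]⟩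
      · exact box_separation hCconv ⟨Zs, hZsS, hZsc⟩ h0 hminC
    refine ⟨x, fun p => Set.mem_Icc.mpr ⟨neg_le_of_abs_le (hxbox p), le_of_abs_le (hxbox p)⟩,
      hMx x, ?_⟩
    apply le_antisymm
    · -- lamMax ≤ 1 - r via attained density matrix
      obtain ⟨Z', hZ'psd, hZ't, hZ'tr⟩ := exists_density_trace_eq_lamMax hN (hMx x)
      have hZ'S : Z' ∈ S := ⟨hZ'psd, hZ't⟩
      have h1 : lamMax (hMx x) = 1 + ∑ p, x p * φ Z' p := by
        rw [← key x Z' hZ'S, hZ'tr]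
        simp
      rw [h1]
      have h2 : ∑ p, x p * φ Z' p ≤ -r := hxC _ ⟨Z', hZ'S, rfl⟩
      linarith
    · -- 1 - r ≤ lamMax via weak duality with Zs
      have h1 := re_trace_mul_le_lamMax hN (hMx x) hZsS.1 hZsS.2
      rw [key x Zs hZsS] at h1
      have h2 : -r ≤ ∑ p, x p * φ Zs p := by
        rw [hZsc, hr, ← Finset.sum_neg_distrib]
        apply Finset.sum_le_sum
        intro p _
        have hxa : |x p| ≤ 1 := hxbox p
        have habs2 : |x p * cstar p| ≤ |cstar p| := by
          rw [abs_mul]; nlinarith [abs_nonneg (cstar p)]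
        have := neg_abs_le (x p * cstar p)
        linarith
      linarith
  -- lower bound for primal set
  · rintro w ⟨x, hxbox, h, hw⟩
    have hxw : lamMax (hMx x) = w := by rw [← hw]
    have h1 := re_trace_mul_le_lamMax hN (hMx x) hZsS.1 hZsS.2
    rw [key x Zs hZsS] at h1
    have h2 : -r ≤ ∑ p, x p * φ Zs p := by
      rw [hZsc, hr, ← Finset.sum_neg_distrib]
      apply Finset.sum_le_sum
      intro p _
      have hxa : |x p| ≤ 1 := abs_le.mpr ⟨(hxbox p).1, (hxbox p).2⟩
      have habs2 : |x p * cstar p| ≤ |cstar p| := by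
        rw [abs_mul]; nlinarith [abs_nonneg (cstar p)]
      have := neg_abs_le (x p * cstar p)
      linarith
    rw [hxw] at h1
    linarith
  -- dual membership value
  · have : ∑ p, ‖(Zs * F p).trace‖ = r := by
      rw [hr, ← hZsc]
      exact Finset.sum_congr rfl fun p _ => habs Zs hZsS p
    rw [this]
  -- dual upper bound
  · rintro w ⟨Z, hZh, hZpsd, hZt, hw⟩
    have hZS : Z ∈ S := ⟨hZpsd, hZt⟩
    have h1 : ∑ p, ‖(Z * F p).trace‖ = ∑ p, |φ Z p| :=
      Finset.sum_congr rfl fun p _ => habs Z hZS p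
    have h2 : r ≤ ∑ p, |φ Z p| := hminC _ ⟨Z, hZS, rfl⟩
    rw [hw, h1]
    linarith
end

section
/- Let H be an n×n real symmetric matrix whose off-diagonal entries are all ≤ 0 (a 'stoquastic' matrix). Then H has an eigenvector v ≠ 0 for its smallest eigenvalue λ_min(H) such that every entry of v is nonnegative. -/
open Matrix

/-- Perron–Frobenius for stoquastic matrices: a real symmetric matrix
with nonpositive off-diagonal entries has an entrywise-nonnegative eigenvector for its
smallest eigenvalue. -/
theorem stoquastic_ground_state_nonneg (n : ℕ) (hn : 0 < n)
    (H : Matrix (Fin n) (Fin n) ℝ) (hH : H.IsHermitian)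
    (hoff : ∀ i j, i ≠ j → H i j ≤ 0) :
    ∃ v : Fin n → ℝ, v ≠ 0 ∧ H *ᵥ v = (⨅ i, hH.eigenvalues i) • v ∧ ∀ i, 0 ≤ v i := by
  have hne : NeZero n := ⟨hn.ne'⟩
  set lam := ⨅ i, hH.eigenvalues i with hlam
  have hlb : ∀ i, lam ≤ hH.eigenvalues i := fun i =>
    ciInf_le (Set.Finite.bddBelow (Set.finite_range _)) i
  obtain ⟨i₀, hi₀⟩ : ∃ i, hH.eigenvalues i = lam := by
    obtain ⟨i, hi⟩ := exists_eq_ciInf_of_finite (f := hH.eigenvalues)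
    exact ⟨i, hi⟩
  set w : Fin n → ℝ := ⇑(hH.eigenvectorBasis i₀) with hw
  have hweig : H *ᵥ w = lam • w := by
    rw [hw, hH.mulVec_eigenvectorBasis, hi₀]
  -- Rayleigh lower bound via the spectral theorem
  have hray : ∀ x : Fin n → ℝ, lam * (x ⬝ᵥ x) ≤ x ⬝ᵥ (H *ᵥ x) := by
    intro x
    set U : Matrix (Fin n) (Fin n) ℝ := (hH.eigenvectorUnitary : Matrix (Fin n) (Fin n) ℝ)
      with hU
    have hUU : U * star U = 1 := (Matrix.mem_unitaryGroup_iff).mp hH.eigenvectorUnitary.2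
    set y : Fin n → ℝ := star U *ᵥ x with hy
    have hxvU : x ᵥ* U = y := by
      rw [hy, ← mulVec_transpose, hU]
      rw [← conjTranspose_eq_transpose_of_trivial]
      rfl
    have hxx : x ⬝ᵥ x = y ⬝ᵥ y := by
      have : U *ᵥ y = x := by
        rw [hy, mulVec_mulVec, hUU, one_mulVec]
      calc x ⬝ᵥ x = x ⬝ᵥ (U *ᵥ y) := by rw [this]
        _ = (x ᵥ* U) ⬝ᵥ y := dotProduct_mulVec _ _ _
        _ = y ⬝ᵥ y := by rw [hxvU]
    have hxHx : x ⬝ᵥ (H *ᵥ x) = ∑ i, hH.eigenvalues i * (y i * y i) := by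
      conv_lhs => rw [hH.spectral_theorem]
      rw [Unitary.conjStarAlgAut_apply, ← hU, ← mulVec_mulVec, ← mulVec_mulVec,
        dotProduct_mulVec, hxvU, ← hy]
      simp only [dotProduct, mulVec_diagonal, Function.comp_apply, RCLike.ofReal_real_eq_id,
        id_eq]
      refine Finset.sum_congr rfl fun i _ => by ring
    rw [hxHx, hxx]
    have : lam * (y ⬝ᵥ y) = ∑ i, lam * (y i * y i) := by
      simp [dotProduct, Finset.mul_sum]
    rw [this]
    exact Finset.sum_le_sum fun i _ =>
      mul_le_mul_of_nonneg_right (hlb i) (mul_self_nonneg _)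
  -- H - lam • 1 is positive semidefinite
  have hherm : (H - lam • 1).IsHermitian := by
    apply hH.sub
    unfold Matrix.IsHermitian
    rw [conjTranspose_smul]
    simp
  have hpsd : PosSemidef (H - lam • 1) := by
    refine PosSemidef.of_dotProduct_mulVec_nonneg hherm fun x => ?_
    have := hray x
    simp only [star_trivial, sub_mulVec, dotProduct_sub, smul_mulVec, one_mulVec,
      dotProduct_smul, smul_eq_mul]
    linarith
  -- the entrywise absolute value of w
  set v : Fin n → ℝ := fun i => |w i| with hv
  have hvv : v ⬝ᵥ v = w ⬝ᵥ w := by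
    simp [dotProduct, hv, abs_mul_abs_self]
  have hquad : v ⬝ᵥ (H *ᵥ v) ≤ w ⬝ᵥ (H *ᵥ w) := by
    simp only [dotProduct, mulVec, Finset.mul_sum]
    refine Finset.sum_le_sum fun i _ => Finset.sum_le_sum fun j _ => ?_
    by_cases hij : i = j
    · subst hij
      simp only [hv]
      have : |w i| * (H i i * |w i|) = H i i * (|w i| * |w i|) := by ring
      rw [this, abs_mul_abs_self]
      ring_nf
      exact le_of_eq (by ring)
    · have h1 : v i * (H i j * v j) = H i j * (v i * v j) := by ring
      have h2 : w i * (H i j * w j) = H i j * (w i * w j) := by ring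
      rw [h1, h2]
      have hle : w i * w j ≤ v i * v j := by
        rw [hv]
        calc w i * w j ≤ |w i * w j| := le_abs_self _
        _ = |w i| * |w j| := abs_mul _ _
      exact mul_le_mul_of_nonpos_left hle (hoff i j hij)
  have hwHw : w ⬝ᵥ (H *ᵥ w) = lam * (w ⬝ᵥ w) := by
    rw [hweig, dotProduct_smul, smul_eq_mul]
  have h0 : v ⬝ᵥ ((H - lam • 1) *ᵥ v) = 0 := by
    have hle : v ⬝ᵥ ((H - lam • 1) *ᵥ v) ≤ 0 := by
      simp only [sub_mulVec, dotProduct_sub, smul_mulVec, one_mulVec,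
        dotProduct_smul, smul_eq_mul]
      rw [hvv]
      linarith
    have hge := hpsd.dotProduct_mulVec_nonneg v
    simp only [star_trivial] at hge
    linarith
  have hAv : (H - lam • 1) *ᵥ v = 0 := by
    rw [← hpsd.dotProduct_mulVec_zero_iff v]
    simpa using h0
  have heig : H *ᵥ v = lam • v := by
    have := hAv
    rw [sub_mulVec, smul_mulVec, one_mulVec, sub_eq_zero] at this
    exact this
  refine ⟨v, ?_, heig, fun i => abs_nonneg _⟩
  -- v ≠ 0
  intro hv0
  have hwne := hH.eigenvectorBasis.orthonormal.ne_zero i₀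
  apply hwne
  apply PiLp.ext
  intro i
  have : v i = 0 := congrFun hv0 i
  rw [hv] at this
  simp only [abs_eq_zero] at this
  simpa [hw] using this
end
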